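/- arXiv:2109.07948 — 2 statements merged into one kernel-verified Lean document; each statement's English description precedes it below -/
import Mathlib

section
/- Let P = (V, ≤) be a poset, G its incomparability graph, X ⊆ V, and r ∈ ℕ. If X is an initial segment (downward closed set) of P, then B_G(X, r) := {v ∈ V : d_G(v, x) ≤ r for some x ∈ X} is an initial segment of P. -/
/-- The incomparability graph of a poset: edges are pairs of incomparable elements. -/
def incompGraph (V : Type*) [PartialOrder V] : SimpleGraph V where
  Adj a b := ¬ a ≤ b ∧ ¬ b ≤ a
  symm := ⟨fun a b h => ⟨h.2, h.1⟩⟩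
  loopless := ⟨fun a h => h.1 le_rfl⟩

/-- `ballSet G X r` is the set of vertices at graphic distance at most `r`
from some vertex of `X` (distance `⊤` if no path exists). -/
def ballSet {V : Type*} (G : SimpleGraph V) (X : Set V) (r : ℕ) : Set V :=
  {v | ∃ x ∈ X, G.edist v x ≤ (r : ℕ∞)}

private lemma aux {V : Type*} [PartialOrder V] (X : Set V)
    (hX : ∀ x y : V, x ≤ y → y ∈ X → x ∈ X) :
    ∀ k : ℕ, ∀ x y : V, x ≤ y → (∃ z ∈ X, (incompGraph V).edist y z ≤ (k : ℕ∞)) →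
      ∃ z ∈ X, (incompGraph V).edist x z ≤ (k : ℕ∞) := by
  intro k
  induction k with
  | zero =>
    intro x y hxy ⟨z, hz, hd⟩
    have : (incompGraph V).edist y z = 0 := le_antisymm (by simpa using hd) zero_le
    rw [SimpleGraph.edist_eq_zero_iff] at this
    subst this
    exact ⟨x, hX x y hxy hz, by simp⟩
  | succ k ih =>
    intro x y hxy ⟨z, hz, hd⟩
    obtain ⟨p, hp⟩ := SimpleGraph.exists_walk_of_edist_ne_top
      (G := incompGraph V) (u := y) (v := z) (by intro h; rw [h] at hd; exact absurd (top_le_iff.mp hd) (by exact_mod_cast ENat.coe_ne_top _))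
    have hplen : (p.length : ℕ∞) ≤ (k + 1 : ℕ) := hp ▸ hd
    cases p with
    | nil =>
      exact ⟨x, hX x y hxy hz, by simp⟩
    | cons h q =>
      rename_i w
      have hqlen : (incompGraph V).edist w z ≤ (k : ℕ∞) := by
        refine le_trans (SimpleGraph.edist_le q) ?_
        have : q.length ≤ k := by
          have := hplen
          simp only [SimpleGraph.Walk.length_cons, Nat.cast_le] at this
          omega
        exact_mod_cast this
      by_cases hc : ¬ x ≤ w ∧ ¬ w ≤ x
      · -- x adjacent to w
        refine ⟨z, hz, ?_⟩
        calc (incompGraph V).edist x z ≤ (incompGraph V).edist x w + (incompGraph V).edist w z :=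
              SimpleGraph.edist_triangle
          _ ≤ 1 + (k : ℕ∞) := by
              refine add_le_add ?_ hqlen
              have : (incompGraph V).Adj x w := hc
              simpa using SimpleGraph.edist_le this.toWalk
          _ = ((k + 1 : ℕ) : ℕ∞) := by push_cast; ring
      · -- x comparable with w; then x ≤ w
        push_neg at hc
        have hxw : x ≤ w := by
          by_cases h1 : x ≤ w
          · exact h1
          · have h2 := hc h1
            exact absurd (le_trans h2 hxy) h.2
        obtain ⟨z', hz', hd'⟩ := ih x w hxw ⟨z, hz, hqlen⟩
        exact ⟨z', hz', le_trans hd' (by exact_mod_cast Nat.le_succ k)⟩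

theorem stmt4 {V : Type*} [PartialOrder V] (X : Set V) (r : ℕ)
    (hX : ∀ x y : V, x ≤ y → y ∈ X → x ∈ X) :
    ∀ x y : V, x ≤ y → y ∈ ballSet (incompGraph V) X r → x ∈ ballSet (incompGraph V) X r := by
  intro x y hxy hy
  exact aux X hX r x y hxy hy
end

section
/- Let P = (V, ≤) be a poset, G its incomparability graph, X ⊆ V order convex, and r ∈ ℕ. Then B_G(X, r) := {v ∈ V : d_G(v, x) ≤ r for some x ∈ X} is order convex in P. -/
/-- A subset of a poset is order convex if it contains every element between two of its members. -/
def OrderConvex {V : Type*} [PartialOrder V] (X : Set V) : Prop :=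
  ∀ x ∈ X, ∀ y ∈ X, ∀ z : V, x ≤ z → z ≤ y → z ∈ X

private lemma walk_le_aux {V : Type*} [PartialOrder V] (z : V) :
    ∀ {x a : V} (p : (incompGraph V).Walk x a), x ≤ z →
      a ≤ z ∨ (incompGraph V).edist z a ≤ (p.length : ℕ∞) := by
  intro x a p
  induction p with
  | nil => intro h; exact Or.inl h
  | @cons x v a h q ih =>
    intro hxz
    by_cases hcomp : (incompGraph V).Adj z v
    · right
      calc (incompGraph V).edist z a
          ≤ (incompGraph V).edist z v + (incompGraph V).edist v a :=
            SimpleGraph.edist_triangle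
        _ ≤ 1 + (q.length : ℕ∞) := by
            gcongr
            · exact le_of_eq (SimpleGraph.edist_eq_one_iff_adj.mpr hcomp)
            · exact SimpleGraph.edist_le q
        _ = (((SimpleGraph.Walk.cons h q)).length : ℕ∞) := by
            simp [SimpleGraph.Walk.length_cons, add_comm]
    · have hvz : v ≤ z := by
        rcases not_and_or.mp hcomp with h1 | h2
        · exact absurd (le_trans hxz (not_not.mp h1)) h.1
        · exact not_not.mp h2
      rcases ih hvz with h' | h'
      · exact Or.inl h'
      · refine Or.inr (le_trans h' ?_)
        exact_mod_cast Nat.le_succ _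

private lemma walk_ge_aux {V : Type*} [PartialOrder V] (z : V) :
    ∀ {y b : V} (p : (incompGraph V).Walk y b), z ≤ y →
      z ≤ b ∨ (incompGraph V).edist z b ≤ (p.length : ℕ∞) := by
  intro y b p
  induction p with
  | nil => intro h; exact Or.inl h
  | @cons y v b h q ih =>
    intro hzy
    by_cases hcomp : (incompGraph V).Adj z v
    · right
      calc (incompGraph V).edist z b
          ≤ (incompGraph V).edist z v + (incompGraph V).edist v b :=
            SimpleGraph.edist_triangle
        _ ≤ 1 + (q.length : ℕ∞) := by
            gcongr
            · exact le_of_eq (SimpleGraph.edist_eq_one_iff_adj.mpr hcomp)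
            · exact SimpleGraph.edist_le q
        _ = (((SimpleGraph.Walk.cons h q)).length : ℕ∞) := by
            simp [SimpleGraph.Walk.length_cons, add_comm]
    · have hzv : z ≤ v := by
        rcases not_and_or.mp hcomp with h1 | h2
        · exact not_not.mp h1
        · exact absurd (le_trans (not_not.mp h2) hzy) h.2
      rcases ih hzv with h' | h'
      · exact Or.inl h'
      · refine Or.inr (le_trans h' ?_)
        exact_mod_cast Nat.le_succ _

theorem stmt5 {V : Type*} [PartialOrder V] (X : Set V) (r : ℕ)
    (hX : OrderConvex X) :
    OrderConvex (ballSet (incompGraph V) X r) := by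
  intro x hx y hy z hxz hzy
  obtain ⟨a, haX, hax⟩ := hx
  obtain ⟨b, hbX, hby⟩ := hy
  obtain ⟨p, hp⟩ := SimpleGraph.exists_walk_of_edist_ne_top
    (ne_top_of_le_ne_top (ENat.coe_ne_top r) hax)
  obtain ⟨q, hq⟩ := SimpleGraph.exists_walk_of_edist_ne_top
    (ne_top_of_le_ne_top (ENat.coe_ne_top r) hby)
  rcases walk_le_aux z p hxz with haz | hd
  · rcases walk_ge_aux z q hzy with hzb | hd'
    · have : z ∈ X := hX a haX b hbX z haz hzb
      exact ⟨z, this, by simp⟩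
    · exact ⟨b, hbX, le_trans hd' (by rw [hq]; exact hby)⟩
  · exact ⟨a, haX, le_trans hd (by rw [hp]; exact hax)⟩
end
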